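/- For every real c < 0 and every r > 0, the quantity D_c(r) := r·√(−c)·coth(√(−c)·r) − 1 satisfies D_c(r) ≥ 3|c|r²/(π² + |c|r²). -/

import Mathlib

open Real

lemma pi_sq_gt_nine : (9:ℝ) < π ^ 2 := by
  nlinarith [Real.pi_gt_three]

lemma h_deriv (x : ℝ) :
    HasDerivAt (fun y : ℝ => (y ^ 2 + π ^ 2 - 8) * Real.sinh y - y * Real.cosh y)
      (x * Real.sinh x + (x ^ 2 + π ^ 2 - 9) * Real.cosh x) x := by
  have h1 : HasDerivAt (fun y : ℝ => (y ^ 2 + π ^ 2 - 8)) (2 * x) x := by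
    simpa using (((hasDerivAt_pow 2 x).add_const (π ^ 2)).sub_const 8)
  have h2 := (h1.mul (Real.hasDerivAt_sinh x)).sub
    ((hasDerivAt_id x).mul (Real.hasDerivAt_cosh x))
  refine h2.congr_deriv ?_
  simp only [id]
  ring

lemma h_nonneg {x : ℝ} (hx : 0 ≤ x) :
    0 ≤ (x ^ 2 + π ^ 2 - 8) * Real.sinh x - x * Real.cosh x := by
  have hmono : Monotone (fun y : ℝ => (y ^ 2 + π ^ 2 - 8) * Real.sinh y - y * Real.cosh y) := by
    apply monotone_of_deriv_nonneg
    · exact fun y => (h_deriv y).differentiableAt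
    · intro y
      rw [(h_deriv y).deriv]
      have h9 := pi_sq_gt_nine
      have hsy : 0 ≤ y * Real.sinh y := by
        rcases le_or_gt 0 y with h | h
        · exact mul_nonneg h (Real.sinh_nonneg_iff.2 h)
        · nlinarith [Real.sinh_nonpos_iff.2 h.le]
      have hcy : 0 < Real.cosh y := Real.cosh_pos y
      nlinarith [sq_nonneg y]
  have := hmono hx
  simpa using this

lemma g_deriv (x : ℝ) :
    HasDerivAt (fun y : ℝ => y * (π ^ 2 + y ^ 2) * Real.cosh y - (π ^ 2 + 4 * y ^ 2) * Real.sinh y)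
      (x * ((x ^ 2 + π ^ 2 - 8) * Real.sinh x - x * Real.cosh x)) x := by
  have h1 : HasDerivAt (fun y : ℝ => y * (π ^ 2 + y ^ 2)) (π ^ 2 + 3 * x ^ 2) x := by
    have := (hasDerivAt_id x).mul (((hasDerivAt_pow 2 x)).const_add (π ^ 2))
    refine this.congr_deriv ?_
    simp only [id]
    ring
  have h2 : HasDerivAt (fun y : ℝ => (π ^ 2 + 4 * y ^ 2)) (8 * x) x := by
    have := ((hasDerivAt_pow 2 x).const_mul 4).const_add (π ^ 2)
    refine this.congr_deriv ?_
    norm_num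
    ring
  have h3 := (h1.mul (Real.hasDerivAt_cosh x)).sub (h2.mul (Real.hasDerivAt_sinh x))
  refine h3.congr_deriv ?_
  ring

lemma g_nonneg {x : ℝ} (hx : 0 ≤ x) :
    (π ^ 2 + 4 * x ^ 2) * Real.sinh x ≤ x * (π ^ 2 + x ^ 2) * Real.cosh x := by
  have hmono : MonotoneOn
      (fun y : ℝ => y * (π ^ 2 + y ^ 2) * Real.cosh y - (π ^ 2 + 4 * y ^ 2) * Real.sinh y)
      (Set.Ici 0) := by
    apply monotoneOn_of_deriv_nonneg (convex_Ici 0)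
    · exact (Continuous.continuousOn (by continuity))
    · intro y _
      exact (g_deriv y).differentiableAt.differentiableWithinAt
    · intro y hy
      rw [interior_Ici] at hy
      rw [(g_deriv y).deriv]
      exact mul_nonneg hy.le (h_nonneg hy.le)
  have := hmono (Set.self_mem_Ici) (Set.mem_Ici.2 hx) hx
  simp only [Real.sinh_zero, Real.cosh_zero] at this
  linarith [this]

lemma key_ineq {x : ℝ} (hx : 0 < x) :
    x * (Real.cosh x / Real.sinh x) - 1 ≥ 3 * x ^ 2 / (π ^ 2 + x ^ 2) := by
  have hs : 0 < Real.sinh x := Real.sinh_pos_iff.2 hx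
  have hp : 0 < π ^ 2 + x ^ 2 := by positivity
  rw [ge_iff_le, show x * (Real.cosh x / Real.sinh x) - 1
      = (x * Real.cosh x - Real.sinh x) / Real.sinh x by field_simp,
    div_le_div_iff₀ hp hs]
  nlinarith [g_nonneg hx.le]

theorem D_c_lower_bound (c r : ℝ) (hc : c < 0) (hr : 0 < r) :
    r * Real.sqrt (-c) * (Real.cosh (Real.sqrt (-c) * r) / Real.sinh (Real.sqrt (-c) * r)) - 1 ≥
      3 * |c| * r ^ 2 / (π ^ 2 + |c| * r ^ 2) := by
  have hc' : 0 < -c := by linarith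
  have hs : 0 < Real.sqrt (-c) := Real.sqrt_pos.2 hc'
  set x := Real.sqrt (-c) * r with hxdef
  have hx : 0 < x := mul_pos hs hr
  have habs : |c| = Real.sqrt (-c) ^ 2 := by
    rw [Real.sq_sqrt hc'.le, abs_of_neg hc]
  have hx2 : |c| * r ^ 2 = x ^ 2 := by rw [habs, hxdef]; ring
  have hrx : r * Real.sqrt (-c) = x := by rw [hxdef]; ring
  rw [show 3 * |c| * r ^ 2 = 3 * x ^ 2 from by rw [habs, hxdef]; ring, hx2, hrx]
  exact key_ineq hx
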